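/- Consider the tripartite Heisenberg XXX Hamiltonian H = J Σ_{l=1}^{3} Σ_{i=1}^{3} σ_i^l σ_i^{l+1} on (ℂ²)^{⊗3} with periodic boundary conditions (σ^4 = σ^1) and J > 0. Then H = −3J·𝟙 + 2J(F₁₂ + F₂₃ + F₃₁), where F_{ab} is the swap operator between qubits a and b; consequently, for any fully separable state ε = Σ_k q_k ρ₁^k⊗ρ₂^k⊗ρ₃^k, Tr[εH] ≥ −3J. -/

import Mathlib

open Matrix ComplexOrder
set_option maxHeartbeats 1000000

/-- The three Pauli matrices. -/
def pauli : Fin 3 → Matrix (Fin 2) (Fin 2) ℂ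
  | 0 => !![0, 1; 1, 0]
  | 1 => !![0, -Complex.I; Complex.I, 0]
  | 2 => !![1, 0; 0, -1]

/-- `M ⊗ N ⊗ 𝟙` acting on sites (1,2) of three qubits. -/
def op12 (M N : Matrix (Fin 2) (Fin 2) ℂ) :
    Matrix (Fin 2 × Fin 2 × Fin 2) (Fin 2 × Fin 2 × Fin 2) ℂ :=
  fun p q => M p.1 q.1 * N p.2.1 q.2.1 * (if p.2.2 = q.2.2 then 1 else 0)

/-- `𝟙 ⊗ M ⊗ N` acting on sites (2,3) of three qubits. -/
def op23 (M N : Matrix (Fin 2) (Fin 2) ℂ) :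
    Matrix (Fin 2 × Fin 2 × Fin 2) (Fin 2 × Fin 2 × Fin 2) ℂ :=
  fun p q => (if p.1 = q.1 then 1 else 0) * M p.2.1 q.2.1 * N p.2.2 q.2.2

/-- `N ⊗ 𝟙 ⊗ M` acting on sites (3,1) of three qubits. -/
def op31 (M N : Matrix (Fin 2) (Fin 2) ℂ) :
    Matrix (Fin 2 × Fin 2 × Fin 2) (Fin 2 × Fin 2 × Fin 2) ℂ :=
  fun p q => N p.1 q.1 * (if p.2.1 = q.2.1 then 1 else 0) * M p.2.2 q.2.2

/-- The swap operator between qubits 1 and 2. -/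
def swap12 : Matrix (Fin 2 × Fin 2 × Fin 2) (Fin 2 × Fin 2 × Fin 2) ℂ :=
  fun p q => if p.1 = q.2.1 ∧ p.2.1 = q.1 ∧ p.2.2 = q.2.2 then 1 else 0

/-- The swap operator between qubits 2 and 3. -/
def swap23 : Matrix (Fin 2 × Fin 2 × Fin 2) (Fin 2 × Fin 2 × Fin 2) ℂ :=
  fun p q => if p.1 = q.1 ∧ p.2.1 = q.2.2 ∧ p.2.2 = q.2.1 then 1 else 0

/-- The swap operator between qubits 3 and 1. -/
def swap31 : Matrix (Fin 2 × Fin 2 × Fin 2) (Fin 2 × Fin 2 × Fin 2) ℂ :=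
  fun p q => if p.1 = q.2.2 ∧ p.2.1 = q.2.1 ∧ p.2.2 = q.1 then 1 else 0

/-- The tripartite Heisenberg XXX Hamiltonian
`H = J Σ_{l=1}^{3} Σ_{i=1}^{3} σ_i^l σ_i^{l+1}` with periodic boundary conditions. -/
noncomputable def xxxTriHamiltonian (J : ℝ) :
    Matrix (Fin 2 × Fin 2 × Fin 2) (Fin 2 × Fin 2 × Fin 2) ℂ :=
  (J : ℂ) • ∑ i : Fin 3,
    (op12 (pauli i) (pauli i) + op23 (pauli i) (pauli i) + op31 (pauli i) (pauli i))

/-- A product state `ρ₁ ⊗ ρ₂ ⊗ ρ₃` of three qubits. -/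
def prod3 (ρ₁ ρ₂ ρ₃ : Matrix (Fin 2) (Fin 2) ℂ) :
    Matrix (Fin 2 × Fin 2 × Fin 2) (Fin 2 × Fin 2 × Fin 2) ℂ :=
  fun p q => ρ₁ p.1 q.1 * ρ₂ p.2.1 q.2.1 * ρ₃ p.2.2 q.2.2


lemma ham_eq (J : ℝ) :
    xxxTriHamiltonian J
      = ((-3 * J : ℝ) : ℂ) • (1 : Matrix (Fin 2 × Fin 2 × Fin 2) (Fin 2 × Fin 2 × Fin 2) ℂ)
        + ((2 * J : ℝ) : ℂ) • (swap12 + swap23 + swap31) := by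
  ext ⟨a, b, c⟩ ⟨d, e, f⟩
  simp only [xxxTriHamiltonian, Fin.sum_univ_three, Matrix.smul_apply, Matrix.add_apply,
    Matrix.sum_apply, Matrix.one_apply, op12, op23, op31, swap12, swap23, swap31, pauli,
    smul_eq_mul, Prod.mk.injEq]
  fin_cases a <;> fin_cases b <;> fin_cases c <;> fin_cases d <;> fin_cases e <;> fin_cases f <;>
    norm_num [Matrix.cons_val_zero, Matrix.cons_val_one, Matrix.head_cons] <;> ring

lemma psd_trace_re_nonneg {n : Type*} [Fintype n] [DecidableEq n]
    {M : Matrix n n ℂ} (hM : M.PosSemidef) : 0 ≤ (M.trace).re := by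
  rw [Matrix.trace]
  have : ∀ i, 0 ≤ (M i i).re := by
    intro i
    have := hM.re_dotProduct_nonneg (Pi.single i 1)
    simpa [dotProduct, Matrix.mulVec, Pi.single_apply] using this
  calc (0:ℝ) ≤ ∑ i, (M i i).re := Finset.sum_nonneg fun i _ => this i
    _ = _ := by simp [Complex.re_sum, Matrix.diag]

lemma trace_mul_psd_re_nonneg {A B : Matrix (Fin 2) (Fin 2) ℂ}
    (hA : A.PosSemidef) (hB : B.PosSemidef) : 0 ≤ ((A * B).trace).re := by
  obtain ⟨C, rfl⟩ : ∃ C : Matrix (Fin 2) (Fin 2) ℂ, A = Cᴴ * C := by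
    open scoped MatrixOrder in exact CStarAlgebra.nonneg_iff_eq_star_mul_self.mp hA.nonneg
  have h1 : (Cᴴ * C * B).trace = (C * B * Cᴴ).trace := by
    rw [Matrix.mul_assoc, Matrix.trace_mul_comm, Matrix.mul_assoc]
  rw [h1]
  exact psd_trace_re_nonneg (hB.mul_mul_conjTranspose_same C)

lemma prod3_trace (a b c : Matrix (Fin 2) (Fin 2) ℂ) :
    (prod3 a b c).trace = a.trace * b.trace * c.trace := by
  simp [Matrix.trace, prod3, Matrix.diag, Fintype.sum_prod_type, Fin.sum_univ_two]; ring

lemma prod3_swap12_trace (a b c : Matrix (Fin 2) (Fin 2) ℂ) :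
    (prod3 a b c * swap12).trace = (a * b).trace * c.trace := by
  simp [Matrix.trace, prod3, swap12, Matrix.diag, Matrix.mul_apply,
    Fintype.sum_prod_type, Fin.sum_univ_two]; ring

lemma prod3_swap23_trace (a b c : Matrix (Fin 2) (Fin 2) ℂ) :
    (prod3 a b c * swap23).trace = a.trace * (b * c).trace := by
  simp [Matrix.trace, prod3, swap23, Matrix.diag, Matrix.mul_apply,
    Fintype.sum_prod_type, Fin.sum_univ_two]; ring

lemma prod3_swap31_trace (a b c : Matrix (Fin 2) (Fin 2) ℂ) :
    (prod3 a b c * swap31).trace = (a * c).trace * b.trace := by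
  simp [Matrix.trace, prod3, swap31, Matrix.diag, Matrix.mul_apply,
    Fintype.sum_prod_type, Fin.sum_univ_two]; ring

/-- `H = −3J·𝟙 + 2J(F₁₂ + F₂₃ + F₃₁)`, and consequently every fully
separable tripartite state `ε = Σ_k q_k ρ₁^k ⊗ ρ₂^k ⊗ ρ₃^k` has
mean energy `Tr[ε H] ≥ −3J` (for `J > 0`). -/
theorem xxx_tripartite_separable_bound (J : ℝ) (hJ : 0 < J) :
    xxxTriHamiltonian J
        = ((-3 * J : ℝ) : ℂ) • (1 : Matrix (Fin 2 × Fin 2 × Fin 2) (Fin 2 × Fin 2 × Fin 2) ℂ)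
          + ((2 * J : ℝ) : ℂ) • (swap12 + swap23 + swap31)
    ∧ (∀ (m : ℕ) (q : Fin m → ℝ)
        (ρ₁ ρ₂ ρ₃ : Fin m → Matrix (Fin 2) (Fin 2) ℂ),
        (∀ k, 0 ≤ q k) → (∑ k, q k = 1) →
        (∀ k, (ρ₁ k).PosSemidef ∧ (ρ₁ k).trace = 1) →
        (∀ k, (ρ₂ k).PosSemidef ∧ (ρ₂ k).trace = 1) →
        (∀ k, (ρ₃ k).PosSemidef ∧ (ρ₃ k).trace = 1) →
        -3 * J ≤ (((∑ k, (q k : ℂ) • prod3 (ρ₁ k) (ρ₂ k) (ρ₃ k))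
            * xxxTriHamiltonian J).trace).re) := by
  refine ⟨ham_eq J, ?_⟩
  intro m q ρ₁ ρ₂ ρ₃ hq hq1 h1 h2 h3
  rw [ham_eq J]
  set S : Fin m → ℂ := fun k => ((ρ₁ k) * (ρ₂ k)).trace + ((ρ₂ k) * (ρ₃ k)).trace
      + ((ρ₁ k) * (ρ₃ k)).trace with hSdef
  have hSre : ∀ k, 0 ≤ (S k).re := by
    intro k
    have e1 := trace_mul_psd_re_nonneg (h1 k).1 (h2 k).1
    have e2 := trace_mul_psd_re_nonneg (h2 k).1 (h3 k).1
    have e3 := trace_mul_psd_re_nonneg (h1 k).1 (h3 k).1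
    simp only [hSdef, Complex.add_re]
    linarith
  have hX : ∀ k, (prod3 (ρ₁ k) (ρ₂ k) (ρ₃ k) *
      (((-3 * J : ℝ) : ℂ) • (1 : Matrix (Fin 2 × Fin 2 × Fin 2) (Fin 2 × Fin 2 × Fin 2) ℂ)
        + ((2 * J : ℝ) : ℂ) • (swap12 + swap23 + swap31))).trace
      = ((-3 * J : ℝ) : ℂ) + ((2 * J : ℝ) : ℂ) * S k := by
    intro k
    simp only [Matrix.mul_add, Matrix.trace_add, Matrix.mul_smul, Matrix.mul_one,
      Matrix.trace_smul, prod3_swap12_trace, prod3_swap23_trace, prod3_swap31_trace,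
      prod3_trace, (h1 k).2, (h2 k).2, (h3 k).2, smul_eq_mul, hSdef]
    ring
  have key : ((∑ k, (q k : ℂ) • prod3 (ρ₁ k) (ρ₂ k) (ρ₃ k)) *
      (((-3 * J : ℝ) : ℂ) • (1 : Matrix (Fin 2 × Fin 2 × Fin 2) (Fin 2 × Fin 2 × Fin 2) ℂ)
        + ((2 * J : ℝ) : ℂ) • (swap12 + swap23 + swap31))).trace
      = ∑ k, (q k : ℂ) * (((-3 * J : ℝ) : ℂ) + ((2 * J : ℝ) : ℂ) * S k) := by
    rw [Finset.sum_mul]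
    simp only [smul_mul_assoc]
    rw [Matrix.trace_sum]
    simp only [Matrix.trace_smul, smul_eq_mul]
    exact Finset.sum_congr rfl fun k _ => by rw [hX k]
  rw [key, Complex.re_sum]
  have hterm : ∀ k, ((q k : ℂ) * (((-3 * J : ℝ) : ℂ) + ((2 * J : ℝ) : ℂ) * S k)).re
      = q k * (-3 * J + 2 * J * (S k).re) := by
    intro k
    simp [Complex.mul_re, Complex.add_re, Complex.add_im, Complex.ofReal_re, Complex.ofReal_im]
  calc -3 * J = ∑ k, q k * (-3 * J) := by rw [← Finset.sum_mul, hq1, one_mul]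
    _ ≤ ∑ k, ((q k : ℂ) * (((-3 * J : ℝ) : ℂ) + ((2 * J : ℝ) : ℂ) * S k)).re := by
        refine Finset.sum_le_sum fun k _ => ?_
        rw [hterm k]
        refine mul_le_mul_of_nonneg_left ?_ (hq k)
        have := hSre k
        nlinarith
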